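/- Let D be a finite digraph without loop-edges and let a, b be distinct vertices of D. Then the elementary collapsing e_{ab} belongs to the flow semigroup S_D if and only if either a→b is an edge of D, or b→a is an edge of D that lies on a directed cycle of D. In particular, if D is strongly connected, then S_D equals the flow semigroup S_{Γ_D} of the simple graph Γ_D obtained from D by forgetting the direction of the edges. -/

import Mathlib

variable {V : Type*}

/-- The elementary collapsing `e_{uv}`: sends `u` to `v` and fixes every other vertex. -/
def collapse [DecidableEq V] (u v : V) : Function.End V :=
  fun x => if x = u then v else x

/-- The flow semigroup of a digraph with edge relation `E`. -/
def flowSemigroup [DecidableEq V] (E : V → V → Prop) : Subsemigroup (Function.End V) :=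
  Subsemigroup.closure {f | ∃ u v, E u v ∧ f = collapse u v}

/-- The directed edge `b → a` lies on a directed cycle of the digraph `E`:
there is a directed cycle `b → a → … → b` with no repeated vertices. -/
def EdgeInDirectedCycle (E : V → V → Prop) (b a : V) : Prop :=
  ∃ l : List V, List.Chain E b (a :: (l ++ [b])) ∧ (b :: a :: l).Nodup

section Prelim
variable [DecidableEq V]

set_option linter.unusedSectionVars false

@[simp] lemma end_mul_apply (f g : Function.End V) (x : V) : (f * g) x = f (g x) := rfl

@[simp] lemma collapse_self (u v : V) : collapse u v u = v := by simp [collapse]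

lemma collapse_ne {u v x : V} (h : x ≠ u) : collapse u v x = x := by simp [collapse, h]

@[simp] lemma end_one_apply (x : V) : (1 : Function.End V) x = x := rfl

def prodMap (l : List (V × V)) : Function.End V :=
  (l.map fun p => collapse p.1 p.2).prod

@[simp] lemma prodMap_nil : (prodMap [] : Function.End V) = 1 := rfl

@[simp] lemma prodMap_cons (p : V × V) (l : List (V × V)) :
    prodMap (p :: l) = collapse p.1 p.2 * prodMap l := by
  simp [prodMap]

@[simp] lemma prodMap_singleton (p : V × V) : prodMap [p] = collapse p.1 p.2 := by
  simp [prodMap]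

lemma mem_flow_iff {E : V → V → Prop} {f : Function.End V} (hf : f ∈ flowSemigroup E) :
    ∃ l : List (V × V), l ≠ [] ∧ (∀ p ∈ l, E p.1 p.2) ∧ f = prodMap l := by
  induction hf using Subsemigroup.closure_induction with
  | mem x hx =>
    obtain ⟨u, v, he, rfl⟩ := hx
    exact ⟨[(u, v)], by simp, by simpa using he, by simp⟩
  | mul x y _ _ hx hy =>
    obtain ⟨l1, h1, he1, rfl⟩ := hx
    obtain ⟨l2, h2, he2, rfl⟩ := hy
    refine ⟨l1 ++ l2, by simp [h1], ?_, ?_⟩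
    · intro p hp; rcases List.mem_append.1 hp with h | h
      · exact he1 p h
      · exact he2 p h
    · simp [prodMap]

lemma prodMap_not_injective {E : V → V → Prop} (hloopless : ∀ v : V, ¬ E v v) :
    ∀ l : List (V × V), l ≠ [] → (∀ p ∈ l, E p.1 p.2) →
    ∃ x y : V, x ≠ y ∧ prodMap l x = prodMap l y := by
  intro l
  induction l with
  | nil => simp
  | cons p rest ih =>
    intro _ he
    rcases eq_or_ne rest [] with rfl | hne
    · refine ⟨p.1, p.2, ?_, ?_⟩
      · intro h; exact hloopless p.1 (h ▸ he p (by simp))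
      · have hne' : p.2 ≠ p.1 := by
          intro h; exact hloopless p.1 (h ▸ he p (by simp))
        simp [collapse_ne hne']
    · obtain ⟨x, y, hxy, hfx⟩ := ih hne (fun q hq => he q (by simp [hq]))
      exact ⟨x, y, hxy, by simp [hfx]⟩

end Prelim

section Core
variable [Fintype V] [DecidableEq V]

lemma core {E : V → V → Prop} (hloopless : ∀ v : V, ¬ E v v) :
    ∀ l : List (V × V), l ≠ [] → (∀ p ∈ l, E p.1 p.2) →
    ∀ p q w : V, p ≠ q →
      prodMap l p = prodMap l q →
      (∀ x y, prodMap l x = prodMap l y → x = y ∨ (x = p ∧ y = q) ∨ (x = q ∧ y = p)) →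
      (∀ x, prodMap l x ≠ w) →
      ∃ u v, l.getLast? = some (u, v) ∧ ((u = p ∧ v = q) ∨ (u = q ∧ v = p)) ∧
        Relation.ReflTransGen E w u := by
  intro l
  induction l with
  | nil => simp
  | cons hd rest ih =>
    intro _ he p q w hpq hmerge hquasi hhole
    obtain ⟨u₁, v₁⟩ := hd
    have hedge1 : E u₁ v₁ := he (u₁, v₁) (by simp)
    have huv : u₁ ≠ v₁ := fun h => hloopless u₁ (by rw [h] at hedge1 ⊢; exact hedge1)
    rcases eq_or_ne rest [] with rfl | hne
    · -- base case : a single collapse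
      simp only [prodMap_cons, prodMap_nil, mul_one] at hmerge hquasi hhole
      have hw : w = u₁ := by
        by_contra hwne
        exact hhole w (collapse_ne hwne)
      refine ⟨u₁, v₁, by simp, ?_, hw ▸ Relation.ReflTransGen.refl⟩
      by_cases hp : p = u₁
      · subst hp
        have hq : q ≠ p := Ne.symm hpq
        have : v₁ = q := by
          have := hmerge
          rwa [collapse_self, collapse_ne hq] at this
        exact Or.inl ⟨rfl, this⟩
      · by_cases hq : q = u₁
        · subst hq
          have : p = v₁ := by
            have := hmerge
            rwa [collapse_self, collapse_ne hp] at this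
          exact Or.inr ⟨rfl, this.symm⟩
        · exfalso
          have := hmerge
          rw [collapse_ne hp, collapse_ne hq] at this
          exact hpq this
    · -- inductive step
      have hrest_edges : ∀ p ∈ rest, E p.1 p.2 := fun p hp => he p (by simp [hp])
      set h' : Function.End V := prodMap rest with hh'
      have happ : ∀ x, prodMap ((u₁, v₁) :: rest) x = collapse u₁ v₁ (h' x) := fun x => by
        simp [hh']
      set n := Fintype.card V with hn
      have hn2 : 2 ≤ n := Fintype.one_lt_card_iff_nontrivial.2 ⟨⟨p, q, hpq⟩⟩
      set S' : Finset V := Finset.image h' Finset.univ with hS'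
      set S : Finset V := Finset.image (prodMap ((u₁, v₁) :: rest)) Finset.univ with hS
      -- S has card n - 1
      have hScard : S.card = n - 1 := by
        have hinj : Set.InjOn (prodMap ((u₁, v₁) :: rest)) (Finset.univ.erase q : Finset V) := by
          intro x hx y hy hxy
          rcases hquasi x y hxy with h | ⟨rfl, rfl⟩ | ⟨rfl, rfl⟩
          · exact h
          · exact absurd (Finset.mem_coe.1 hy) (by simp)
          · exact absurd (Finset.mem_coe.1 hx) (by simp)
        have himg : Finset.image (prodMap ((u₁, v₁) :: rest)) (Finset.univ.erase q) = S := by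
          apply Finset.Subset.antisymm
          · exact Finset.image_subset_image (Finset.subset_univ _) |>.trans (le_refl _)
          · intro z hz
            obtain ⟨x, _, rfl⟩ := Finset.mem_image.1 hz
            rcases eq_or_ne x q with rfl | hxq
            · exact Finset.mem_image.2 ⟨p, by simp [hpq], hmerge.symm ▸ rfl⟩
            · exact Finset.mem_image.2 ⟨x, by simp [hxq], rfl⟩
        rw [← himg, Finset.card_image_of_injOn hinj, Finset.card_erase_of_mem (by simp),
          Finset.card_univ]
      -- S' has card ≤ n - 1
      have hS'le : S'.card ≤ n - 1 := by
        obtain ⟨x₀, y₀, hxy₀, heq₀⟩ := prodMap_not_injective hloopless rest hne hrest_edges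
        have hsub : S' ⊆ Finset.image h' (Finset.univ.erase y₀) := by
          intro z hz
          obtain ⟨x, _, rfl⟩ := Finset.mem_image.1 hz
          rcases eq_or_ne x y₀ with rfl | hxy
          · exact Finset.mem_image.2 ⟨x₀, by simp [hxy₀], heq₀⟩
          · exact Finset.mem_image.2 ⟨x, by simp [hxy], rfl⟩
        calc S'.card ≤ (Finset.image h' (Finset.univ.erase y₀)).card := Finset.card_le_card hsub
          _ ≤ (Finset.univ.erase y₀).card := Finset.card_image_le
          _ = n - 1 := by rw [Finset.card_erase_of_mem (by simp), Finset.card_univ]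
      have himg2 : S = Finset.image (collapse u₁ v₁) S' := by
        rw [hS', Finset.image_image (f := h') (g := (collapse u₁ v₁ : V → V))]
        apply Finset.image_congr
        intro x _
        exact happ x
      have hS'card : S'.card = n - 1 := le_antisymm hS'le (by
        calc n - 1 = S.card := hScard.symm
          _ ≤ S'.card := by rw [himg2]; exact Finset.card_image_le)
      have hinjOn : Set.InjOn (collapse u₁ v₁) S' :=
        Finset.injOn_of_card_image_eq (by rw [← himg2, hScard, hS'card])
      -- the hole w' of h'
      have hcompl : (Finset.univ \ S').card = 1 := by
        rw [Finset.card_sdiff_of_subset (Finset.subset_univ _), Finset.card_univ, hS'card]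
        omega
      obtain ⟨w', hw'⟩ := Finset.card_eq_one.1 hcompl
      have hw'notin : w' ∉ S' := by
        have : w' ∈ Finset.univ \ S' := hw' ▸ Finset.mem_singleton_self w'
        exact (Finset.mem_sdiff.1 this).2
      have hmem' : ∀ z : V, z ≠ w' → z ∈ S' := by
        intro z hz
        by_contra hzS
        have : z ∈ Finset.univ \ S' := Finset.mem_sdiff.2 ⟨Finset.mem_univ z, hzS⟩
        rw [hw'] at this
        exact hz (Finset.mem_singleton.1 this)
      have hh'ne : ∀ x, h' x ≠ w' := by
        intro x hx
        exact hw'notin (hx ▸ Finset.mem_image.2 ⟨x, Finset.mem_univ x, rfl⟩)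
      have hmemS' : ∀ x, h' x ∈ S' := fun x => Finset.mem_image.2 ⟨x, Finset.mem_univ x, rfl⟩
      -- new merge hypothesis
      have h'merge : h' p = h' q := by
        have := hmerge
        rw [happ p, happ q] at this
        exact hinjOn (Finset.mem_coe.2 (hmemS' p)) (Finset.mem_coe.2 (hmemS' q)) this
      have h'quasi : ∀ x y, h' x = h' y → x = y ∨ (x = p ∧ y = q) ∨ (x = q ∧ y = p) := by
        intro x y hxy
        exact hquasi x y (by rw [happ x, happ y, hxy])
      -- w' is u₁ or v₁
      have hw'uv : w' = u₁ ∨ w' = v₁ := by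
        by_contra hc
        push_neg at hc
        have h1 : u₁ ∈ S' := hmem' u₁ fun h => hc.1 h.symm
        have h2 : v₁ ∈ S' := hmem' v₁ fun h => hc.2 h.symm
        have : collapse u₁ v₁ u₁ = collapse u₁ v₁ v₁ := by
          rw [collapse_self, collapse_ne (Ne.symm huv)]
        exact huv (hinjOn (Finset.mem_coe.2 h1) (Finset.mem_coe.2 h2) this)
      -- w = u₁
      have hu₁S : u₁ ∉ S := by
        intro hmem
        obtain ⟨x, _, hx⟩ := Finset.mem_image.1 hmem
        rw [happ x] at hx
        rcases hw'uv with rfl | rfl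
        · have : h' x ≠ w' := hh'ne x
          rw [collapse_ne this] at hx
          exact this hx
        · rcases eq_or_ne (h' x) u₁ with h | h
          · rw [h, collapse_self] at hx
            exact huv hx.symm
          · rw [collapse_ne h] at hx
            exact h hx
      have hSeq : S = Finset.univ.erase u₁ := by
        apply Finset.eq_of_subset_of_card_le
        · intro z hz
          exact Finset.mem_erase.2 ⟨fun h => hu₁S (h ▸ hz), Finset.mem_univ z⟩
        · rw [Finset.card_erase_of_mem (by simp), Finset.card_univ, hScard]
      have hwu₁ : w = u₁ := by
        have hwS : w ∉ S := by
          intro hmem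
          obtain ⟨x, _, hx⟩ := Finset.mem_image.1 hmem
          exact hhole x hx
        rw [hSeq] at hwS
        by_contra hne'
        exact hwS (Finset.mem_erase.2 ⟨hne', Finset.mem_univ w⟩)
      have hreach1 : Relation.ReflTransGen E w w' := by
        rcases hw'uv with rfl | rfl
        · rw [hwu₁]
        · rw [hwu₁]
          exact Relation.ReflTransGen.single hedge1
      obtain ⟨u, v, hlast, hmatch, hreach⟩ :=
        ih hne hrest_edges p q w' hpq h'merge h'quasi hh'ne
      obtain ⟨r, rs, rfl⟩ := List.exists_cons_of_ne_nil hne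
      exact ⟨u, v, by simpa using hlast, hmatch, hreach1.trans hreach⟩

end Core

section Paths
variable {E : V → V → Prop}

lemma chain_split' {R : V → V → Prop} {a b : V} {l₁ l₂ : List V} :
    List.Chain R a (l₁ ++ b :: l₂) ↔ List.Chain R a (l₁ ++ [b]) ∧ List.Chain R b l₂ := by
  unfold List.Chain; exact List.isChain_cons_split

lemma chain_cons' {R : V → V → Prop} {a b : V} {l : List V} :
    List.Chain R a (b :: l) ↔ R a b ∧ List.Chain R b l := by
  unfold List.Chain; exact List.isChain_cons_cons

lemma not_nodup_split : ∀ {l : List V}, ¬ l.Nodup →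
    ∃ (x : V) (l1 l2 l3 : List V), l = l1 ++ x :: (l2 ++ x :: l3) := by
  intro l
  induction l with
  | nil => simp
  | cons y t ih =>
    intro h
    rw [List.nodup_cons] at h
    push_neg at h
    by_cases hy : y ∈ t
    · obtain ⟨s, u, rfl⟩ := List.append_of_mem hy
      exact ⟨y, [], s, u, by simp⟩
    · obtain ⟨x, l1, l2, l3, rfl⟩ := ih (h hy)
      exact ⟨x, y :: l1, l2, l3, by simp⟩

lemma chain_shorten : ∀ (n : ℕ) (a b : V) (l : List V), l.length ≤ n → a ≠ b →
    List.Chain E a (l ++ [b]) →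
    ∃ l', List.Chain E a (l' ++ [b]) ∧ (a :: (l' ++ [b])).Nodup := by
  intro n
  induction n with
  | zero =>
    intro a b l hl hab hc
    rw [List.length_eq_zero_iff.1 (Nat.le_zero.1 hl)] at hc
    exact ⟨[], hc, by simp [hab]⟩
  | succ n ih =>
    intro a b l hl hab hc
    by_cases hnd : (a :: (l ++ [b])).Nodup
    · exact ⟨l, hc, hnd⟩
    · rw [List.nodup_cons] at hnd
      push_neg at hnd
      by_cases ha : a ∈ l ++ [b]
      · rcases List.mem_append.1 ha with ha | ha
        · obtain ⟨s, t, rfl⟩ := List.append_of_mem ha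
          rw [List.append_assoc, List.cons_append, chain_split'] at hc
          refine ih a b t ?_ hab hc.2
          simp at hl ⊢; omega
        · exact absurd (List.mem_singleton.1 ha) hab
      · by_cases hb : b ∈ l
        · obtain ⟨s, t, rfl⟩ := List.append_of_mem hb
          rw [List.append_assoc, List.cons_append, chain_split'] at hc
          refine ih a b s ?_ hab hc.1
          simp at hl ⊢; omega
        · by_cases hln : l.Nodup
          · exact absurd (hnd ha) (not_not.2 (by
              rw [List.nodup_append]
              exact ⟨hln, by simp, fun x hx y hy hxy => by simp at hy; subst hy; subst hxy; exact hb hx⟩))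
          · obtain ⟨x, l1, l2, l3, rfl⟩ := not_nodup_split hln
            have hc1 : List.Chain E a (l1 ++ [x]) ∧ List.Chain E x ((l2 ++ x :: l3) ++ [b]) := by
              rw [← chain_split']
              simpa using hc
            have hc2 : List.Chain E x (l3 ++ [b]) := by
              have := hc1.2
              rw [List.append_assoc, List.cons_append, chain_split'] at this
              exact this.2
            have hc3 : List.Chain E a ((l1 ++ x :: l3) ++ [b]) := by
              rw [List.append_assoc, List.cons_append, chain_split']
              exact ⟨hc1.1, hc2⟩
            refine ih a b (l1 ++ x :: l3) ?_ hab hc3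
            simp at hl ⊢; omega

lemma reach_chain {a b : V} (h : Relation.ReflTransGen E a b) :
    a = b ∨ ∃ l : List V, List.Chain E a (l ++ [b]) := by
  induction h with
  | refl => exact Or.inl rfl
  | tail _ hedge ih =>
    rename_i c d _
    right
    rcases ih with rfl | ⟨l, hl⟩
    · exact ⟨[], List.Chain.cons hedge List.Chain.nil⟩
    · refine ⟨l ++ [c], ?_⟩
      rw [List.append_assoc, List.singleton_append, chain_split']
      exact ⟨hl, List.Chain.cons hedge List.Chain.nil⟩

lemma cycle_of_reach {a b : V} (hba : E b a) (hab : a ≠ b)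
    (hreach : Relation.ReflTransGen E a b) : EdgeInDirectedCycle E b a := by
  rcases reach_chain hreach with rfl | ⟨l, hl⟩
  · exact absurd rfl hab
  · obtain ⟨l', hc, hnd⟩ := chain_shorten l.length a b l le_rfl hab hl
    refine ⟨l', ?_, ?_⟩
    · rw [chain_cons']
      exact ⟨hba, hc⟩
    · rw [List.nodup_cons] at hnd ⊢
      obtain ⟨hal, hnd'⟩ := hnd
      rw [List.nodup_append] at hnd'
      constructor
      · simp only [List.mem_cons]
        rintro (rfl | hbl)
        · exact hab rfl
        · exact hnd'.2.2 b hbl b (by simp) rfl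
      · rw [List.nodup_cons]
        refine ⟨fun h => hal (List.mem_append.2 (Or.inl h)), hnd'.1⟩
end Paths

section Construction
variable [DecidableEq V] {E : V → V → Prop}

def Uprod (c : ℕ → V) (n : ℕ) : ℕ → Function.End V
  | 0 => collapse (c n) (c (n + 1))
  | (k + 1) => collapse (c (n - (k + 1))) (c (n - k)) * Uprod c n k

lemma Uprod_mem (c : ℕ → V) (n : ℕ) (hedge : ∀ i, E (c i) (c (i + 1))) :
    ∀ k, k ≤ n - 1 → Uprod c n k ∈ flowSemigroup E := by
  intro k
  induction k with
  | zero =>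
    intro _
    exact Subsemigroup.subset_closure ⟨c n, c (n + 1), hedge n, rfl⟩
  | succ k ih =>
    intro hk
    refine Subsemigroup.mul_mem _ (Subsemigroup.subset_closure ⟨_, _, ?_, rfl⟩) (ih (by omega))
    have h : n - (k + 1) + 1 = n - k := by omega
    rw [← h]
    exact hedge (n - (k + 1))

lemma Uprod_eval (c : ℕ → V) (n : ℕ) (hn : 2 ≤ n)
    (hinj : ∀ i, i < n → ∀ j, j < n → c i = c j → i = j)
    (hcn : c n = c 0) (hcn1 : c (n + 1) = c 1) :
    ∀ k, k ≤ n - 2 →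
      (Uprod c n k (c 0) = c 1) ∧
      (∀ j, n - k ≤ j → j ≤ n - 1 → Uprod c n k (c j) = c (j + 1)) ∧
      (∀ x, x ≠ c 0 → (∀ j, n - k ≤ j → j ≤ n - 1 → x ≠ c j) → Uprod c n k x = x) := by
  intro k
  induction k with
  | zero =>
    intro _
    refine ⟨?_, ?_, ?_⟩
    · show collapse (c n) (c (n + 1)) (c 0) = c 1
      rw [hcn, hcn1, collapse_self]
    · intro j h1 h2; omega
    · intro x hx0 _
      show collapse (c n) (c (n + 1)) x = x
      rw [hcn]; exact collapse_ne hx0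
  | succ k ih =>
    intro hk
    obtain ⟨ih0, ihmid, ihfix⟩ := ih (by omega)
    have hii : n - (k + 1) + 1 = n - k := by omega
    have happly : ∀ x, Uprod c n (k + 1) x
        = collapse (c (n - (k + 1))) (c (n - k)) (Uprod c n k x) := fun x => rfl
    refine ⟨?_, ?_, ?_⟩
    · rw [happly, ih0, collapse_ne]
      intro h
      have := hinj 1 (by omega) (n - (k + 1)) (by omega) h
      omega
    · intro j hj1 hj2
      rcases eq_or_ne j (n - (k + 1)) with rfl | hjne
      · rw [happly, ihfix _ (fun h => by have := hinj _ (by omega) 0 (by omega) h; omega)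
          (fun j' h1' h2' h => by have := hinj _ (by omega) j' (by omega) h; omega),
          collapse_self, hii]
      · have hj1' : n - k ≤ j := by omega
        rw [happly, ihmid j hj1' hj2, collapse_ne]
        intro h
        rcases eq_or_ne (j + 1) n with he | hne2
        · rw [he, hcn] at h
          have := hinj 0 (by omega) (n - (k + 1)) (by omega) h
          omega
        · have := hinj (j + 1) (by omega) (n - (k + 1)) (by omega) h
          omega
    · intro x hx0 hxj
      rw [happly, ihfix x hx0 (fun j h1 h2 => hxj j (by omega) h2),
        collapse_ne (hxj _ (by omega) (by omega))]

def tauF (n j : ℕ) : ℕ := if j ≤ 1 then 2 % n else (j + 1) % n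

lemma tauF_lt (n : ℕ) (hn : 2 ≤ n) (j : ℕ) : tauF n j < n := by
  unfold tauF; split <;> exact Nat.mod_lt _ (by omega)

def Tmap (c : ℕ → V) (n : ℕ) : Function.End V :=
  collapse (c 1) (c 2) * Uprod c n (n - 2)

lemma Tmap_mem (c : ℕ → V) (n : ℕ) (hedge : ∀ i, E (c i) (c (i + 1))) :
    Tmap c n ∈ flowSemigroup E :=
  Subsemigroup.mul_mem _ (Subsemigroup.subset_closure ⟨c 1, c 2, hedge 1, rfl⟩)
    (Uprod_mem c n hedge (n - 2) (by omega))

lemma Tmap_eval (c : ℕ → V) (n : ℕ) (hn : 2 ≤ n)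
    (hinj : ∀ i, i < n → ∀ j, j < n → c i = c j → i = j)
    (hper : ∀ i, c (i % n) = c i) (hcn : c n = c 0) (hcn1 : c (n + 1) = c 1) :
    (∀ j, j < n → Tmap c n (c j) = c (tauF n j)) ∧
    (∀ x, (∀ j, j < n → x ≠ c j) → Tmap c n x = x) := by
  obtain ⟨h0, hmid, hfix⟩ := Uprod_eval c n hn hinj hcn hcn1 (n - 2) le_rfl
  have happly : ∀ x, Tmap c n x = collapse (c 1) (c 2) (Uprod c n (n - 2) x) := fun _ => rfl
  constructor
  · intro j hj
    rcases Nat.lt_or_ge j 2 with hj2 | hj2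
    · have htau : tauF n j = 2 % n := by simp [tauF]; omega
      rw [htau, hper 2]
      interval_cases j
      · rw [happly, h0, collapse_self]
      · rw [happly, hfix (c 1)
          (fun h => by have := hinj 1 (by omega) 0 (by omega) h; omega)
          (fun j' h1' h2' h => by have := hinj 1 (by omega) j' (by omega) h; omega),
          collapse_self]
    · have htau : tauF n j = (j + 1) % n := by simp [tauF]; omega
      rw [htau, hper (j + 1), happly, hmid j (by omega) (by omega), collapse_ne]
      intro h
      rcases eq_or_ne (j + 1) n with he | hne
      · rw [he, hcn] at h
        have := hinj 0 (by omega) 1 (by omega) h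
        omega
      · have := hinj (j + 1) (by omega) 1 (by omega) h
        omega
  · intro x hx
    rw [happly, hfix x (hx 0 (by omega)) (fun j h1 h2 => hx j (by omega)),
      collapse_ne (hx 1 (by omega))]

lemma Tpow_eval (c : ℕ → V) (n : ℕ) (hn : 2 ≤ n)
    (hinj : ∀ i, i < n → ∀ j, j < n → c i = c j → i = j)
    (hper : ∀ i, c (i % n) = c i) (hcn : c n = c 0) (hcn1 : c (n + 1) = c 1) :
    ∀ k, (∀ j, j < n → (Tmap c n ^ k) (c j) = c ((tauF n)^[k] j)) ∧
      (∀ x, (∀ j, j < n → x ≠ c j) → (Tmap c n ^ k) x = x) := by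
  obtain ⟨hT, hTfix⟩ := Tmap_eval c n hn hinj hper hcn hcn1
  intro k
  induction k with
  | zero => constructor <;> simp
  | succ k ih =>
    constructor
    · intro j hj
      rw [pow_succ, end_mul_apply, hT j hj, ih.1 _ (tauF_lt n hn j),
        Function.iterate_succ_apply]
    · intro x hx
      rw [pow_succ, end_mul_apply, hTfix x hx]
      exact ih.2 x hx

def psiF (m t : ℕ) : ℕ := if t = 0 then 0 else t + 1
def posF (j : ℕ) : ℕ := if j ≤ 1 then 0 else j - 1

lemma tauF_iter (n : ℕ) (hn : 2 ≤ n) :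
    ∀ k, 1 ≤ k → ∀ j, j < n → (tauF n)^[k] j = psiF (n - 1) ((posF j + k) % (n - 1)) := by
  intro k
  induction k with
  | zero => exact fun h => absurd h (by omega)
  | succ k ih =>
    intro _ j hj
    rcases Nat.eq_zero_or_pos k with rfl | hk
    · rw [Function.iterate_one]
      by_cases hj1 : j ≤ 1
      · simp only [tauF, posF, if_pos hj1, Nat.zero_add]
        rcases eq_or_ne n 2 with rfl | hne
        · norm_num [psiF]
        · rw [Nat.mod_eq_of_lt (show 1 < n - 1 by omega),
            Nat.mod_eq_of_lt (show 2 < n by omega)]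
          simp [psiF]
      · simp only [tauF, posF, if_neg hj1]
        have hj2 : 2 ≤ j := by omega
        rw [show j - 1 + 1 = j from by omega]
        rcases eq_or_ne j (n - 1) with rfl | hne
        · rw [show n - 1 + 1 = n from by omega, Nat.mod_self, Nat.mod_self]
          simp [psiF]
        · rw [Nat.mod_eq_of_lt (show j + 1 < n by omega),
            Nat.mod_eq_of_lt (show j < n - 1 by omega)]
          simp only [psiF, if_neg (show j ≠ 0 by omega)]
    · rw [Function.iterate_succ_apply', ih hk j hj]
      set m := n - 1 with hm
      obtain ⟨t, ht⟩ : ∃ t, t = (posF j + k) % m := ⟨_, rfl⟩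
      have htm : t < m := by rw [ht]; exact Nat.mod_lt _ (by omega)
      have hstep : (posF j + (k + 1)) % m = (t + 1) % m := by
        rw [ht, show posF j + (k + 1) = posF j + k + 1 from by omega,
          Nat.add_mod (posF j + k) 1 m, Nat.add_mod_mod, Nat.mod_add_mod]
      rw [hstep, ← ht]
      rcases eq_or_ne t 0 with rfl | ht0
      · simp only [psiF, if_pos rfl]
        simp only [tauF, if_pos (show (0:ℕ) ≤ 1 by omega)]
        rcases eq_or_ne m 1 with hm1 | hm1
        · have hn2 : n = 2 := by omega
          rw [hm1, hn2]
          norm_num [psiF]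
        · rw [Nat.mod_eq_of_lt (show 1 < m by omega),
            Nat.mod_eq_of_lt (show 2 < n by omega)]
          simp [psiF]
      · simp only [psiF, if_neg ht0]
        simp only [tauF, if_neg (show ¬ (t + 1 ≤ 1) by omega)]
        rcases eq_or_ne (t + 1) m with he | hne
        · rw [show t + 1 + 1 = n from by omega, Nat.mod_self, he, Nat.mod_self]
          simp [psiF]
        · rw [Nat.mod_eq_of_lt (show t + 1 + 1 < n by omega),
            Nat.mod_eq_of_lt (show t + 1 < m by omega)]
          simp only [psiF, if_neg (show t + 1 ≠ 0 by omega)]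

lemma pow_mem_flow {f : Function.End V} (hf : f ∈ flowSemigroup E) :
    ∀ k, f ^ (k + 1) ∈ flowSemigroup E := by
  intro k
  induction k with
  | zero => simpa using hf
  | succ k ih => rw [pow_succ]; exact Subsemigroup.mul_mem _ ih hf

lemma chain_getD (d : V) : ∀ (x : V) (P : List V), List.Chain E x P →
    ∀ i, i + 1 < (x :: P).length →
      E ((x :: P).getD i d) ((x :: P).getD (i + 1) d) := by
  intro x P
  induction P generalizing x with
  | nil => intro _ i hi; simp at hi
  | cons y P' ih =>
    intro hc i hi
    rw [chain_cons'] at hc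
    match i with
    | 0 => simpa using hc.1
    | (i + 1) =>
      have := ih y hc.2 i (by simpa using hi)
      simpa using this

lemma construction (E : V → V → Prop) {a b : V} {l : List V}
    (hchain : List.Chain E b (a :: (l ++ [b]))) (hnd : (b :: a :: l).Nodup) :
    collapse a b ∈ flowSemigroup E := by
  classical
  set L : List V := b :: a :: l with hL
  set n : ℕ := L.length with hn
  have hn2 : 2 ≤ n := by
    have : n = l.length + 2 := by simp [hn, hL]
    omega
  set c : ℕ → V := fun i => (L ++ [b]).getD (i % n) b with hc
  have hmodlt : ∀ i : ℕ, i % n < n := fun i => Nat.mod_lt _ (by omega)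
  have hcL : ∀ i : ℕ, c i = L.getD (i % n) b := fun i =>
    List.getD_append L [b] b (i % n) (hmodlt i)
  have hc0 : c 0 = b := by rw [hcL, Nat.zero_mod]; simp [hL]
  have hc1 : c 1 = a := by
    rw [hcL, Nat.mod_eq_of_lt (by omega)]; simp [hL]
  have hper : ∀ i, c (i % n) = c i := by
    intro i
    simp only [hc, Nat.mod_mod_of_dvd i (dvd_refl n)]
  have hcn : c n = c 0 := by simp only [hc, Nat.mod_self, Nat.zero_mod]
  have hcn1 : c (n + 1) = c 1 := by
    have h1 : (n + 1) % n = 1 % n := by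
      rw [Nat.add_mod, Nat.mod_self, Nat.zero_add, Nat.mod_mod_of_dvd 1 (dvd_refl n)]
    simp only [hc, h1]
  have hinj : ∀ i, i < n → ∀ j, j < n → c i = c j → i = j := by
    intro i hi j hj hij
    rw [hcL, hcL, Nat.mod_eq_of_lt hi, Nat.mod_eq_of_lt hj,
      List.getD_eq_getElem L b hi, List.getD_eq_getElem L b hj] at hij
    exact hnd.getElem_inj_iff.1 hij
  have hX : L ++ [b] = b :: (a :: (l ++ [b])) := by simp [hL]
  have hXlen : (L ++ [b]).length = n + 1 := by simp [hn]
  have hedgeD : ∀ i, i + 1 < n + 1 →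
      E ((L ++ [b]).getD i b) ((L ++ [b]).getD (i + 1) b) := by
    intro i hi
    have := chain_getD b b (a :: (l ++ [b])) hchain i (by rw [← hX, hXlen]; exact hi)
    rwa [← hX] at this
  have hXn : (L ++ [b]).getD n b = b := by
    rw [List.getD_append_right L [b] b n (by omega), hn]
    simp
  have hedge : ∀ i, E (c i) (c (i + 1)) := by
    intro i
    have hrw : c (i + 1) = (L ++ [b]).getD ((i % n + 1) % n) b := by
      simp only [hc, Nat.add_mod i 1 n, Nat.mod_mod_of_dvd 1 (dvd_refl n), Nat.mod_add_mod]
    rcases eq_or_ne (i % n) (n - 1) with he | hne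
    · have h0 : (i % n + 1) % n = 0 := by rw [he, show n - 1 + 1 = n from by omega, Nat.mod_self]
      have hb : c (i + 1) = b := by rw [hrw, h0]; simp [hL]
      rw [hb, ← hXn]
      have := hedgeD (n - 1) (by omega)
      rw [show n - 1 + 1 = n from by omega] at this
      simp only [hc, he]
      exact this
    · have hlt : i % n + 1 < n := by have := hmodlt i; omega
      have := hedgeD (i % n) (by omega)
      rw [hrw, Nat.mod_eq_of_lt hlt]
      simp only [hc]
      exact this
  -- final computation
  have hTmem : Tmap c n ∈ flowSemigroup E := Tmap_mem c n hedge
  have hba : b ≠ a := by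
    have := hnd
    rw [List.nodup_cons] at this
    exact fun h => this.1 (by simp [h])
  have hkey : collapse a b = Tmap c n ^ (n - 1) := by
    obtain ⟨hTp, hTpfix⟩ := Tpow_eval c n hn2 hinj hper hcn hcn1 (n - 1)
    funext x
    by_cases hx : ∃ j, j < n ∧ x = c j
    · obtain ⟨j, hj, rfl⟩ := hx
      rw [hTp j hj, tauF_iter n hn2 (n - 1) (by omega) j hj, Nat.add_mod_right]
      by_cases hj1 : j ≤ 1
      · have hidx : psiF (n - 1) (posF j % (n - 1)) = 0 := by
          simp [posF, hj1, psiF]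
        rw [hidx]
        interval_cases j
        · rw [hc0, collapse_ne hba]
        · rw [hc1, hc0, collapse_self]
      · have hidx : psiF (n - 1) (posF j % (n - 1)) = j := by
          simp only [posF, if_neg hj1]
          rw [Nat.mod_eq_of_lt (show j - 1 < n - 1 by omega)]
          simp only [psiF, if_neg (show j - 1 ≠ 0 by omega)]
          omega
        rw [hidx]
        apply collapse_ne
        intro h
        rw [← hc1] at h
        have := hinj j hj 1 (by omega) h
        omega
    · push_neg at hx
      rw [hTpfix x (fun j hj => hx j hj)]
      apply collapse_ne
      intro h
      exact hx 1 (by omega) (by rw [hc1]; exact h)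
  rw [hkey, show n - 1 = (n - 2) + 1 from by omega]
  exact pow_mem_flow hTmem (n - 2)

end Construction

lemma mem_of_getLast?' {α : Type*} : ∀ {l : List α} {x : α}, l.getLast? = some x → x ∈ l := by
  intro l
  induction l with
  | nil => simp
  | cons y t ih =>
    intro x h
    rcases eq_or_ne t [] with rfl | hne
    · simp_all
    · obtain ⟨z, zs, rfl⟩ := List.exists_cons_of_ne_nil hne
      rw [List.getLast?_cons_cons] at h
      simp [ih h]

theorem stmt0 [Fintype V] [DecidableEq V] (E : V → V → Prop)
    (hloopless : ∀ v : V, ¬ E v v) (a b : V) (hab : a ≠ b) :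
    (collapse a b ∈ flowSemigroup E ↔ (E a b ∨ (E b a ∧ EdgeInDirectedCycle E b a)))
    ∧ ((∀ u v : V, Relation.ReflTransGen E u v) →
        flowSemigroup E = flowSemigroup (fun u v => E u v ∨ E v u)) := by
  have main : ∀ (a b : V), a ≠ b →
      (collapse a b ∈ flowSemigroup E ↔ (E a b ∨ (E b a ∧ EdgeInDirectedCycle E b a))) := by
    intro a b hab
    constructor
    · intro hmem
      obtain ⟨l, hne, he, heq⟩ := mem_flow_iff hmem
      have hmerge : prodMap l a = prodMap l b := by
        rw [← heq, collapse_self, collapse_ne (Ne.symm hab)]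
      have hquasi : ∀ x y, prodMap l x = prodMap l y →
          x = y ∨ (x = a ∧ y = b) ∨ (x = b ∧ y = a) := by
        intro x y h
        rw [← heq] at h
        by_cases hx : x = a <;> by_cases hy : y = a
        · exact Or.inl (hx.trans hy.symm)
        · subst hx
          rw [collapse_self, collapse_ne hy] at h
          exact Or.inr (Or.inl ⟨rfl, h.symm⟩)
        · subst hy
          rw [collapse_self, collapse_ne hx] at h
          exact Or.inr (Or.inr ⟨h, rfl⟩)
        · rw [collapse_ne hx, collapse_ne hy] at h
          exact Or.inl h
      have hhole : ∀ x, prodMap l x ≠ a := by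
        intro x
        rw [← heq]
        by_cases hx : x = a
        · subst hx; rw [collapse_self]; exact Ne.symm hab
        · rw [collapse_ne hx]; exact hx
      obtain ⟨u, v, hlast, hmatch, hreach⟩ := core hloopless l hne he a b a hab hmerge hquasi hhole
      have hedgeuv : E u v := he _ (mem_of_getLast?' hlast)
      rcases hmatch with ⟨rfl, rfl⟩ | ⟨rfl, rfl⟩
      · exact Or.inl hedgeuv
      · exact Or.inr ⟨hedgeuv, cycle_of_reach hedgeuv hab hreach⟩
    · rintro (h | ⟨hba, l, hchain, hnd⟩)
      · exact Subsemigroup.subset_closure ⟨a, b, h, rfl⟩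
      · exact construction E hchain hnd
  refine ⟨main a b hab, ?_⟩
  intro hconn
  apply le_antisymm
  · apply Subsemigroup.closure_le.2
    rintro f ⟨u, v, huv, rfl⟩
    exact Subsemigroup.subset_closure ⟨u, v, Or.inl huv, rfl⟩
  · apply Subsemigroup.closure_le.2
    rintro f ⟨u, v, huv, rfl⟩
    have huvne : u ≠ v := by
      intro e
      subst e
      rcases huv with h | h <;> exact hloopless u h
    rcases huv with h | h
    · exact Subsemigroup.subset_closure ⟨u, v, h, rfl⟩
    · exact (main u v huvne).2 (Or.inr ⟨h, cycle_of_reach h huvne (hconn u v)⟩)
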